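/- In the decoding setup with a uniform message (p_m = 1/|M| for all m), let δ ≥ 0 and let 𝓓 be a quantum channel from operators on C⊗E′ to operators on N such that ‖(id_{RM} ⊗ 𝓓)(τ^{RMCE′}) − |σ⟩⟨σ|^{RMN}‖₁ ≤ δ. For each message m define τ_m = 𝓓( Tr_D[ (U⊗I_{E′})(|ψ_m⟩⟨ψ_m|^N ⊗ |ω⟩⟨ω|^{EE′})(U⊗I_{E′})ᴴ ] ) (the partial trace keeping C⊗E′) and the decoding probabilities p(m′|m) = ⟨ψ_{m′}| τ_m |ψ_{m′}⟩. Then the average probability of incorrectly decoding the message satisfies (1/|M|)·∑_m ∑_{m′ ≠ m} p(m′|m) ≤ δ/2. -/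

import Mathlib

open scoped BigOperators Kronecker Classical ComplexOrder
open Matrix MeasureTheory

noncomputable section

/-- Outer product `|v⟩⟨v|`. -/
def outer {A : Type*} [Fintype A] (v : A → ℂ) : Matrix A A ℂ :=
  Matrix.of fun i j => v i * star (v j)

/-- Trace norm `‖X‖₁ = Tr √(XᴴX)`. -/
def traceNorm {A : Type*} [Fintype A] [DecidableEq A] (X : Matrix A A ℂ) : ℝ :=
  (((Matrix.posSemidef_conjTranspose_mul_self X).1.eigenvectorUnitary : Matrix A A ℂ) *
    Matrix.diagonal (((↑) : ℝ → ℂ) ∘ (√·) ∘ (Matrix.posSemidef_conjTranspose_mul_self X).1.eigenvalues) *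
    (star (Matrix.posSemidef_conjTranspose_mul_self X).1.eigenvectorUnitary : Matrix A A ℂ)).trace.re

/-- Frobenius norm `‖X‖₂`. -/
def frobNorm {A : Type*} [Fintype A] (X : Matrix A A ℂ) : ℝ :=
  Real.sqrt ((Xᴴ * X).trace.re)

/-- Operator norm (largest singular value) `‖X‖_∞`. -/
def opNorm {A : Type*} [Fintype A] [DecidableEq A] (X : Matrix A A ℂ) : ℝ :=
  ‖Matrix.toEuclideanCLM (𝕜 := ℂ) X‖

instance matrixMeasurableSpace {m n : Type*} : MeasurableSpace (Matrix m n ℂ) :=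
  inferInstanceAs (MeasurableSpace (m → n → ℂ))

/-- A measurement superoperator (given by its POVM elements `Ms`) applied to the second
factor of a bipartite operator, tensored with the identity on the first factor `W`. -/
def measApply {W A X : Type*} [Fintype A] [DecidableEq X]
    (Ms : X → Matrix A A ℂ) (ρ : Matrix (W × A) (W × A) ℂ) :
    Matrix (W × X) (W × X) ℂ :=
  Matrix.of fun p q =>
    if p.2 = q.2 then ∑ a : A, ∑ a' : A, Ms p.2 a a' * ρ (p.1, a') (q.1, a) else 0

/-- A measurement superoperator applied to an operator (no side register). -/
def measApply0 {A X : Type*} [Fintype A] [DecidableEq X]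
    (Ms : X → Matrix A A ℂ) (ρ : Matrix A A ℂ) : Matrix X X ℂ :=
  Matrix.of fun i j => if i = j then ∑ a : A, ∑ a' : A, Ms i a a' * ρ a' a else 0

/-- The elements `Ms` form a POVM: each is positive semidefinite and they sum to `I`. -/
def IsPOVM {A X : Type*} [Fintype A] [Fintype X] [DecidableEq A]
    (Ms : X → Matrix A A ℂ) : Prop :=
  (∀ i, (Ms i).PosSemidef) ∧ ∑ i, Ms i = 1

/-- The tuple of unit vectors `χ` defines an `(s,η)`-quasi-measurement:
`(|A|/s) ∑ᵢ |χᵢ⟩⟨χᵢ| ≤ η I`. -/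
def IsQuasiTuple {A : Type*} [Fintype A] [DecidableEq A] (s : ℕ) (η : ℝ)
    (χ : Fin s → A → ℂ) : Prop :=
  (∀ i, ∑ a, Complex.normSq (χ i a) = 1) ∧
  ((η : ℂ) • (1 : Matrix A A ℂ) -
    ((Fintype.card A : ℂ) / (s : ℂ)) • ∑ i, outer (χ i)).PosSemidef

/-- The kernel elements `(|A|/s)|χᵢ⟩⟨χᵢ|` of an `(s,η)`-quasi-measurement. -/
def quasiKernel {A : Type*} [Fintype A] (s : ℕ) (χ : Fin s → A → ℂ) :
    Fin s → Matrix A A ℂ :=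
  fun i => ((Fintype.card A : ℂ) / (s : ℂ)) • outer (χ i)

/-- Choi matrix of a superoperator `Φ`. -/
def choiMat {A B : Type*} [Fintype A] [DecidableEq A]
    (Φ : Matrix A A ℂ →ₗ[ℂ] Matrix B B ℂ) : Matrix (A × B) (A × B) ℂ :=
  Matrix.of fun p q => Φ (Matrix.single p.1 q.1 1) p.2 q.2

/-- `Φ` is a quantum channel: completely positive (PSD Choi matrix) and trace-preserving. -/
def IsCPTP {A B : Type*} [Fintype A] [DecidableEq A] [Fintype B]
    (Φ : Matrix A A ℂ →ₗ[ℂ] Matrix B B ℂ) : Prop :=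
  (choiMat Φ).PosSemidef ∧ ∀ X, (Φ X).trace = X.trace

/-- `(id_W ⊗ Φ)(ρ)`: apply a superoperator to the second tensor factor. -/
def applyRight {W A B : Type*} (Φ : Matrix A A ℂ →ₗ[ℂ] Matrix B B ℂ)
    (ρ : Matrix (W × A) (W × A) ℂ) : Matrix (W × B) (W × B) ℂ :=
  Matrix.of fun p q => Φ (Matrix.of fun u v => ρ (p.1, u) (q.1, v)) p.2 q.2

/-- The global pure state `(I_{RM} ⊗ U ⊗ I_{E'})(|σ⟩^{RMN} ⊗ |ω⟩^{EE'})` of the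
decoding setup, as a vector on `R⊗M⊗(C⊗D)⊗E'`. -/
def decVec (dM dC dD dE dE' : ℕ) (p : Fin dM → ℝ) (ψ : Fin dM → Fin dM → ℂ)
    (ω : Fin dE × Fin dE' → ℂ)
    (U : Matrix (Fin dC × Fin dD) (Fin dM × Fin dE) ℂ) :
    (Fin dM × Fin dM) × ((Fin dC × Fin dD) × Fin dE') → ℂ :=
  fun q => (if q.1.1 = q.1.2 then (Real.sqrt (p q.1.2) : ℂ) else 0) *
    ∑ n : Fin dM, ∑ e : Fin dE, U q.2.1 (n, e) * ψ q.1.2 n * ω (e, q.2.2)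

/-- `τ^{RMD}`. -/
def tauRMD (dM dC dD dE dE' : ℕ) (p : Fin dM → ℝ) (ψ : Fin dM → Fin dM → ℂ)
    (ω : Fin dE × Fin dE' → ℂ) (U : Matrix (Fin dC × Fin dD) (Fin dM × Fin dE) ℂ) :
    Matrix ((Fin dM × Fin dM) × Fin dD) ((Fin dM × Fin dM) × Fin dD) ℂ :=
  Matrix.of fun x y => ∑ c : Fin dC, ∑ f : Fin dE',
    decVec dM dC dD dE dE' p ψ ω U (x.1, ((c, x.2), f)) *
      star (decVec dM dC dD dE dE' p ψ ω U (y.1, ((c, y.2), f)))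

/-- `τ^D`. -/
def tauD (dM dC dD dE dE' : ℕ) (p : Fin dM → ℝ) (ψ : Fin dM → Fin dM → ℂ)
    (ω : Fin dE × Fin dE' → ℂ) (U : Matrix (Fin dC × Fin dD) (Fin dM × Fin dE) ℂ) :
    Matrix (Fin dD) (Fin dD) ℂ :=
  Matrix.of fun d d' => ∑ x : Fin dM × Fin dM, ∑ c : Fin dC, ∑ f : Fin dE',
    decVec dM dC dD dE dE' p ψ ω U (x, ((c, d), f)) *
      star (decVec dM dC dD dE dE' p ψ ω U (x, ((c, d'), f)))

/-- `τ^{RMCE'}`. -/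
def tauRMCE' (dM dC dD dE dE' : ℕ) (p : Fin dM → ℝ) (ψ : Fin dM → Fin dM → ℂ)
    (ω : Fin dE × Fin dE' → ℂ) (U : Matrix (Fin dC × Fin dD) (Fin dM × Fin dE) ℂ) :
    Matrix ((Fin dM × Fin dM) × (Fin dC × Fin dE'))
      ((Fin dM × Fin dM) × (Fin dC × Fin dE')) ℂ :=
  Matrix.of fun x y => ∑ d : Fin dD,
    decVec dM dC dD dE dE' p ψ ω U (x.1, ((x.2.1, d), x.2.2)) *
      star (decVec dM dC dD dE dE' p ψ ω U (y.1, ((y.2.1, d), y.2.2)))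

/-- The purified message vector `|σ⟩^{RMN} = ∑ₘ √pₘ |m⟩|m⟩|ψₘ⟩`. -/
def sigmaVec (dM : ℕ) (p : Fin dM → ℝ) (ψ : Fin dM → Fin dM → ℂ) :
    (Fin dM × Fin dM) × Fin dM → ℂ :=
  fun q => (if q.1.1 = q.1.2 then (Real.sqrt (p q.1.2) : ℂ) else 0) * ψ q.1.2 q.2

/-- `σ^{RM} = Tr_N |σ⟩⟨σ|^{RMN}`. -/
def sigmaRM (dM : ℕ) (p : Fin dM → ℝ) (ψ : Fin dM → Fin dM → ℂ) :
    Matrix (Fin dM × Fin dM) (Fin dM × Fin dM) ℂ :=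
  Matrix.of fun x y => ∑ n : Fin dM, sigmaVec dM p ψ (x, n) * star (sigmaVec dM p ψ (y, n))

/-- The encoded state of message `m`, as a vector on `(C⊗D)⊗E'`. -/
def msgVec (dM dC dD dE dE' : ℕ) (ψ : Fin dM → Fin dM → ℂ)
    (ω : Fin dE × Fin dE' → ℂ) (U : Matrix (Fin dC × Fin dD) (Fin dM × Fin dE) ℂ)
    (m : Fin dM) : (Fin dC × Fin dD) × Fin dE' → ℂ :=
  fun q => ∑ n : Fin dM, ∑ e : Fin dE, U q.1 (n, e) * ψ m n * ω (e, q.2)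

/-- `Tr_D[(U⊗I)(|ψₘ⟩⟨ψₘ| ⊗ |ω⟩⟨ω|)(U⊗I)ᴴ]` on `C⊗E'`. -/
def msgCE' (dM dC dD dE dE' : ℕ) (ψ : Fin dM → Fin dM → ℂ)
    (ω : Fin dE × Fin dE' → ℂ) (U : Matrix (Fin dC × Fin dD) (Fin dM × Fin dE) ℂ)
    (m : Fin dM) : Matrix (Fin dC × Fin dE') (Fin dC × Fin dE') ℂ :=
  Matrix.of fun x y => ∑ d : Fin dD,
    msgVec dM dC dD dE dE' ψ ω U m ((x.1, d), x.2) *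
      star (msgVec dM dC dD dE dE' ψ ω U m ((y.1, d), y.2))

lemma psd_diag_re_nonneg {n : Type*} [Fintype n] [DecidableEq n]
    {M : Matrix n n ℂ} (hM : M.PosSemidef) (i : n) : 0 ≤ (M i i).re := by
  have h := hM.dotProduct_mulVec_nonneg (Pi.single i 1)
  simp [dotProduct, mulVec, Pi.single_apply, Finset.sum_ite_eq, dotProduct] at h
  exact (Complex.le_def.mp h).1

lemma key_bound {n : Type*} [Fintype n] [DecidableEq n]
    (X P : Matrix n n ℂ) (hX : X.IsHermitian) (hTr : X.trace = 0)
    (hP : P.PosSemidef) (hP1 : (1 - P).PosSemidef) :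
    (P * X).trace.re ≤ traceNorm X / 2 := by
  set V : Matrix n n ℂ := (hX.eigenvectorUnitary : Matrix n n ℂ) with hV
  set lam : n → ℝ := hX.eigenvalues with hlam
  have hVV : Vᴴ * V = 1 := by
    have := (Matrix.mem_unitaryGroup_iff').mp hX.eigenvectorUnitary.2
    simpa [Matrix.star_eq_conjTranspose] using this
  have cancel : ∀ (M : Matrix n n ℂ), Vᴴ * (V * M) = M := fun M => by
    rw [← Matrix.mul_assoc, hVV, Matrix.one_mul]
  have hspec : X = V * Matrix.diagonal (fun i => (lam i : ℂ)) * Vᴴ := by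
    have := hX.spectral_theorem
    simpa [Matrix.star_eq_conjTranspose, Function.comp_def] using this
  -- trace norm = sum of |eigenvalues|
  have hTN : traceNorm X = ∑ i, |lam i| := by
    have habs : (0 : n → ℂ) ≤ (fun i => ((|lam i| : ℝ) : ℂ)) := by
      intro i
      rw [Complex.le_def]
      simp [abs_nonneg]
    set S : Matrix n n ℂ := V * Matrix.diagonal (fun i => ((|lam i| : ℝ) : ℂ)) * Vᴴ with hS
    have hSpsd : S.PosSemidef :=
      (Matrix.PosSemidef.diagonal habs).mul_mul_conjTranspose_same V
    have hsq : S ^ 2 = Xᴴ * X := by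
      rw [hX.eq, pow_two, hS, hspec]
      simp only [Matrix.mul_assoc]
      rw [cancel, ← Matrix.mul_assoc (Matrix.diagonal _), Matrix.diagonal_mul_diagonal,
        cancel, ← Matrix.mul_assoc (Matrix.diagonal _), Matrix.diagonal_mul_diagonal]
      have hfun : (fun i => ((|lam i| : ℝ) : ℂ) * ((|lam i| : ℝ) : ℂ))
          = fun i => ((lam i : ℝ) : ℂ) * ((lam i : ℝ) : ℂ) := by
        funext i
        rw [← Complex.ofReal_mul, ← Complex.ofReal_mul, abs_mul_abs_self]
      rw [hfun]
    have hSeq : S = ((Matrix.posSemidef_conjTranspose_mul_self X).1.eigenvectorUnitary : Matrix n n ℂ) *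
        Matrix.diagonal (((↑) : ℝ → ℂ) ∘ (√·) ∘ (Matrix.posSemidef_conjTranspose_mul_self X).1.eigenvalues) *
        (star (Matrix.posSemidef_conjTranspose_mul_self X).1.eigenvectorUnitary : Matrix n n ℂ) := by
      open scoped MatrixOrder in
      rw [← CFC.sqrt_unique (a := Xᴴ * X) (b := S) (by rw [← pow_two, hsq])
          (Matrix.nonneg_iff_posSemidef.mpr hSpsd),
        CFC.sqrt_eq_real_sqrt _
          (Matrix.nonneg_iff_posSemidef.mpr (Matrix.posSemidef_conjTranspose_mul_self X)),
        cfcₙ_eq_cfc (hf0 := Real.sqrt_zero), (Matrix.posSemidef_conjTranspose_mul_self X).1.cfc_eq, Matrix.IsHermitian.cfc,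
        Unitary.conjStarAlgAut_apply]
      rfl
    have htr : S.trace = ∑ i, ((|lam i| : ℝ) : ℂ) := by
      rw [hS, Matrix.trace_mul_cycle, hVV, Matrix.one_mul, Matrix.trace_diagonal]
    rw [traceNorm, ← hSeq, htr]
    simp
  -- sum of eigenvalues is zero
  have hsum0 : ∑ i, lam i = 0 := by
    have h1 : X.trace = ∑ i, (lam i : ℂ) := by
      rw [hspec, Matrix.trace_mul_cycle, hVV, Matrix.one_mul, Matrix.trace_diagonal]
    rw [hTr] at h1
    have := congrArg Complex.re h1.symm
    simpa using this
  -- trace of P X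
  set t : n → ℝ := fun i => ((Vᴴ * P * V) i i).re with ht
  have htrPX : (P * X).trace.re = ∑ i, t i * lam i := by
    have h1 : (P * X).trace = ∑ i, (Vᴴ * (P * V)) i i * (lam i : ℂ) := by
      rw [hspec]
      rw [show P * (V * Matrix.diagonal (fun i => (lam i : ℂ)) * Vᴴ)
          = (P * V) * Matrix.diagonal (fun i => (lam i : ℂ)) * Vᴴ by
        simp only [Matrix.mul_assoc]]
      rw [Matrix.trace_mul_cycle, ← Matrix.mul_assoc]
      simp [Matrix.trace, Matrix.diag, Matrix.mul_diagonal, Matrix.mul_assoc]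
    rw [h1]
    rw [Complex.re_sum]
    refine Finset.sum_congr rfl fun i _ => ?_
    rw [← Matrix.mul_assoc]
    simp [ht, Complex.mul_re]
  -- bounds on t
  have ht0 : ∀ i, 0 ≤ t i := fun i =>
    psd_diag_re_nonneg (hP.conjTranspose_mul_mul_same V) i
  have ht1 : ∀ i, t i ≤ 1 := by
    intro i
    have hpsd := hP1.conjTranspose_mul_mul_same (B := V)
    have h2 := psd_diag_re_nonneg hpsd i
    have h3 : Vᴴ * (1 - P) * V = 1 - Vᴴ * P * V := by
      rw [Matrix.mul_sub, Matrix.sub_mul, Matrix.mul_one, hVV]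
    rw [h3] at h2
    have h4 : ((1 : Matrix n n ℂ) i i).re = 1 := by simp
    simp only [Matrix.sub_apply, Complex.sub_re, h4] at h2
    have : t i = ((Vᴴ * P * V) i i).re := rfl
    linarith
  -- conclude
  rw [htrPX, hTN]
  have step : ∀ i, t i * lam i ≤ (|lam i| + lam i) / 2 := by
    intro i
    have h1 := ht0 i
    have h2 := ht1 i
    have h3 : lam i ≤ |lam i| := le_abs_self _
    have h4 : -|lam i| ≤ lam i := neg_abs_le _
    nlinarith
  calc ∑ i, t i * lam i ≤ ∑ i, (|lam i| + lam i) / 2 := Finset.sum_le_sum fun i _ => step i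
    _ = ((∑ i, |lam i|) + ∑ i, lam i) / 2 := by rw [← Finset.sum_add_distrib, Finset.sum_div]
    _ = (∑ i, |lam i|) / 2 := by rw [hsum0, add_zero]

lemma expand_apply {A B : Type*} [Fintype A] [DecidableEq A] [Fintype B]
    (Φ : Matrix A A ℂ →ₗ[ℂ] Matrix B B ℂ) (X : Matrix A A ℂ) (b b' : B) :
    Φ X b b' = ∑ i, ∑ j, X i j * Φ (Matrix.single i j 1) b b' := by
  have hst : ∀ i j, (Matrix.single i j (X i j) : Matrix A A ℂ)
      = X i j • Matrix.single i j 1 := by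
    intro i j
    rw [Matrix.smul_single, smul_eq_mul, mul_one]
  conv_lhs => rw [Matrix.matrix_eq_sum_single X]
  rw [map_sum]
  simp only [map_sum, hst, _root_.map_smul, Matrix.sum_apply, Matrix.smul_apply, smul_eq_mul]

lemma choi_conjTranspose {A B : Type*} [Fintype A] [DecidableEq A] [Fintype B]
    (Φ : Matrix A A ℂ →ₗ[ℂ] Matrix B B ℂ) (hC : (choiMat Φ).IsHermitian)
    (X : Matrix A A ℂ) : Φ Xᴴ = (Φ X)ᴴ := by
  ext b b'
  have key : ∀ (i j : A), star (Φ (Matrix.single i j 1) b' b)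
      = Φ (Matrix.single j i 1) b b' := by
    intro i j
    have h := hC.apply (j, b) (i, b')
    simp only [choiMat, Matrix.of_apply] at h
    exact h
  rw [Matrix.conjTranspose_apply, expand_apply, expand_apply]
  rw [star_sum]
  simp only [star_sum, star_mul', key, Matrix.conjTranspose_apply]
  rw [Finset.sum_comm]

lemma applyRight_isHermitian {W A B : Type*} [Fintype W] [Fintype A] [DecidableEq A] [Fintype B]
    (Φ : Matrix A A ℂ →ₗ[ℂ] Matrix B B ℂ) (hC : (choiMat Φ).IsHermitian)
    {ρ : Matrix (W × A) (W × A) ℂ} (hρ : ρ.IsHermitian) :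
    (applyRight Φ ρ).IsHermitian := by
  show (applyRight Φ ρ)ᴴ = applyRight Φ ρ
  ext p q
  rw [Matrix.conjTranspose_apply]
  show star (Φ (Matrix.of fun u v => ρ (q.1, u) (p.1, v)) q.2 p.2)
      = Φ (Matrix.of fun u v => ρ (p.1, u) (q.1, v)) p.2 q.2
  have h1 : star (Φ (Matrix.of fun u v => ρ (q.1, u) (p.1, v)) q.2 p.2)
      = (Φ (Matrix.of fun u v => ρ (q.1, u) (p.1, v)))ᴴ p.2 q.2 := by
    rw [Matrix.conjTranspose_apply]
  rw [h1, ← choi_conjTranspose Φ hC]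
  have h2 : (Matrix.of fun u v => ρ (q.1, u) (p.1, v))ᴴ
      = Matrix.of fun u v => ρ (p.1, u) (q.1, v) := by
    ext u v
    show star (ρ (q.1, v) (p.1, u)) = ρ (p.1, u) (q.1, v)
    exact hρ.apply _ _
  rw [h2]

lemma applyRight_trace {W A B : Type*} [Fintype W] [Fintype A] [Fintype B]
    (Φ : Matrix A A ℂ →ₗ[ℂ] Matrix B B ℂ) (hTP : ∀ X, (Φ X).trace = X.trace)
    (ρ : Matrix (W × A) (W × A) ℂ) : (applyRight Φ ρ).trace = ρ.trace := by
  have key : ∀ w : W, ∑ b : B, applyRight Φ ρ (w, b) (w, b) = ∑ a : A, ρ (w, a) (w, a) := by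
    intro w
    have h1 : ∑ b : B, applyRight Φ ρ (w, b) (w, b)
        = (Φ (Matrix.of fun u v => ρ (w, u) (w, v))).trace := by
      simp [applyRight, Matrix.trace, Matrix.diag]
    rw [h1, hTP]
    simp [Matrix.trace, Matrix.diag]
  calc (applyRight Φ ρ).trace = ∑ w : W, ∑ b : B, applyRight Φ ρ (w, b) (w, b) := by
        simp [Matrix.trace, Matrix.diag, Fintype.sum_prod_type]
    _ = ∑ w : W, ∑ a : A, ρ (w, a) (w, a) := by simp only [key]
    _ = ρ.trace := by simp [Matrix.trace, Matrix.diag, Fintype.sum_prod_type]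

lemma outer_isHermitian {A : Type*} [Fintype A] (v : A → ℂ) : (outer v).IsHermitian := by
  ext i j
  simp [outer, Matrix.conjTranspose_apply, mul_comm]

lemma outer_posSemidef {A : Type*} [Fintype A] (v : A → ℂ) : (outer v).PosSemidef := by
  refine Matrix.PosSemidef.of_dotProduct_mulVec_nonneg (outer_isHermitian v) fun x => ?_
  set c : ℂ := ∑ j, star (v j) * x j with hc
  have h1 : (outer v) *ᵥ x = fun i => v i * c := by
    funext i
    simp only [mulVec, dotProduct, outer, Matrix.of_apply, hc, Finset.mul_sum]
    exact Finset.sum_congr rfl fun j _ => by ring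
  have h2 : dotProduct (star x) ((outer v) *ᵥ x) = star c * c := by
    rw [h1]
    simp only [dotProduct, Pi.star_apply, hc, star_sum, star_mul', star_star, Finset.sum_mul]
    exact Finset.sum_congr rfl fun j _ => by ring
  rw [h2]
  exact star_mul_self_nonneg c

lemma outer_mul_outer {A : Type*} [Fintype A] (u w : A → ℂ) (z : ℂ)
    (h : ∑ a, star (u a) * w a = z) :
    outer u * outer w = z • Matrix.of fun a b => u a * star (w b) := by
  ext a b
  simp only [Matrix.mul_apply, outer, Matrix.of_apply, Matrix.smul_apply, smul_eq_mul, ← h,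
    Finset.sum_mul]
  exact Finset.sum_congr rfl fun k _ => by ring

lemma psd_sum {A ι : Type*} [Fintype A] (s : Finset ι) (f : ι → Matrix A A ℂ)
    (h : ∀ i ∈ s, (f i).PosSemidef) : (∑ i ∈ s, f i).PosSemidef := by
  classical
  induction s using Finset.induction_on with
  | empty => simpa using Matrix.PosSemidef.zero
  | insert a t hni ih =>
    rw [Finset.sum_insert hni]
    exact (h a (Finset.mem_insert_self a t)).add
      (ih fun i hi => h i (Finset.mem_insert_of_mem hi))

lemma sum_outer_proj {A ι : Type*} [Fintype A] [DecidableEq ι] (s : Finset ι) (v : ι → A → ℂ)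
    (h : ∀ i ∈ s, ∀ j ∈ s, ∑ a, star (v i a) * v j a = if i = j then 1 else 0) :
    (∑ i ∈ s, outer (v i)) * (∑ i ∈ s, outer (v i)) = ∑ i ∈ s, outer (v i) := by
  rw [Finset.sum_mul]
  refine Finset.sum_congr rfl fun i hi => ?_
  rw [Finset.mul_sum]
  have hterm : ∀ j ∈ s, outer (v i) * outer (v j)
      = if i = j then outer (v i) else 0 := by
    intro j hj
    rw [outer_mul_outer (v i) (v j) _ (h i hi j hj)]
    split
    · next heq => subst heq; rw [one_smul]; rfl
    · rw [zero_smul]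
  rw [Finset.sum_congr rfl hterm]
  simp [Finset.sum_ite_eq, hi]

lemma psd_one_sub {A : Type*} [Fintype A] [DecidableEq A] (P : Matrix A A ℂ)
    (hH : P.IsHermitian) (hidem : P * P = P) : (1 - P).PosSemidef := by
  have h1 : (1 - P)ᴴ = 1 - P := by
    rw [Matrix.conjTranspose_sub, Matrix.conjTranspose_one, hH.eq]
  have h2 : (1 - P)ᴴ * (1 - P) = 1 - P := by
    rw [h1, Matrix.mul_sub, Matrix.sub_mul, Matrix.sub_mul, Matrix.one_mul, Matrix.mul_one,
      hidem, Matrix.one_mul]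
    abel
  rw [← h2]
  exact Matrix.posSemidef_conjTranspose_mul_self _

lemma unitary_norm {α β : Type*} [Fintype α] [Fintype β] [DecidableEq β]
    (U : Matrix α β ℂ) (hU : Uᴴ * U = 1) (w : β → ℂ) :
    ∑ x, (U *ᵥ w) x * star ((U *ᵥ w) x) = ∑ b, w b * star (w b) := by
  have h1 : ∑ x, (U *ᵥ w) x * star ((U *ᵥ w) x)
      = dotProduct (star (U *ᵥ w)) (U *ᵥ w) := by
    simp [dotProduct, mul_comm]
  rw [h1, Matrix.star_mulVec, Matrix.dotProduct_mulVec, Matrix.vecMul_vecMul,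
    ← Matrix.dotProduct_mulVec, hU]
  simp [dotProduct, mul_comm]


lemma sqrt_pair (a : ℝ) (ha : 0 ≤ a) (z w : ℂ) :
    ((Real.sqrt a : ℝ) : ℂ) * z * star (((Real.sqrt a : ℝ) : ℂ) * w) = (a : ℂ) * (z * star w) := by
  have h : ((Real.sqrt a : ℝ) : ℂ) * ((Real.sqrt a : ℝ) : ℂ) = (a : ℂ) := by
    rw [← Complex.ofReal_mul, Real.mul_self_sqrt ha]
  rw [star_mul', Complex.star_def, Complex.conj_ofReal, ← h]
  ring

/-- Decoding the purified message implies a small average error probability for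
decoding the classical message (Section `sec:how-to-lock`). -/
theorem decoding_implies_small_error_probability
    (dM dC dD dE dE' : ℕ) (hdim : dM * dE = dC * dD)
    (p : Fin dM → ℝ) (hp0 : ∀ m, 0 ≤ p m) (hp1 : ∑ m, p m = 1)
    (hunif : ∀ m, p m = 1 / (dM : ℝ))
    (ψ : Fin dM → Fin dM → ℂ)
    (hψ : ∀ m m', ∑ n, star (ψ m n) * ψ m' n = if m = m' then 1 else 0)
    (ω : Fin dE × Fin dE' → ℂ) (hω : ∑ q, Complex.normSq (ω q) = 1)
    (U : Matrix (Fin dC × Fin dD) (Fin dM × Fin dE) ℂ)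
    (hU : Uᴴ * U = 1 ∧ U * Uᴴ = 1)
    (𝓓 : Matrix (Fin dC × Fin dE') (Fin dC × Fin dE') ℂ →ₗ[ℂ] Matrix (Fin dM) (Fin dM) ℂ)
    (h𝓓 : IsCPTP 𝓓)
    (δ : ℝ) (hδ0 : 0 ≤ δ)
    (hdec : traceNorm (applyRight 𝓓 (tauRMCE' dM dC dD dE dE' p ψ ω U)
        - outer (sigmaVec dM p ψ)) ≤ δ) :
    (1 / (dM : ℝ)) * ∑ m : Fin dM, ∑ m' ∈ Finset.univ.filter (fun m' : Fin dM => m' ≠ m),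
        (∑ n, ∑ n', star (ψ m' n) * 𝓓 (msgCE' dM dC dD dE dE' ψ ω U m) n n' * ψ m' n').re
      ≤ δ / 2 := by
  classical
  set τ := tauRMCE' dM dC dD dE dE' p ψ ω U with hτ
  set σv := sigmaVec dM p ψ with hσv
  set Y := applyRight 𝓓 τ - outer σv with hY
  set v : Fin dM × Fin dM → ((Fin dM × Fin dM) × Fin dM) → ℂ :=
    fun pr q => (if q.1 = (pr.1, pr.1) then 1 else 0) * ψ pr.2 q.2 with hv
  set s : Finset (Fin dM × Fin dM) := Finset.univ.filter (fun pr => pr.2 ≠ pr.1) with hs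
  set P : Matrix ((Fin dM × Fin dM) × Fin dM) ((Fin dM × Fin dM) × Fin dM) ℂ :=
    ∑ i ∈ s, outer (v i) with hP
  -- orthonormality of the v family
  have h_on : ∀ i j : Fin dM × Fin dM,
      ∑ a, star (v i a) * v j a = if i = j then 1 else 0 := by
    intro i j
    rw [Fintype.sum_prod_type]
    have hterm : ∀ (x : Fin dM × Fin dM) (k : Fin dM),
        star (v i (x, k)) * v j (x, k)
        = ((if x = (i.1, i.1) then (1:ℂ) else 0) * (if x = (j.1, j.1) then 1 else 0))
          * (star (ψ i.2 k) * ψ j.2 k) := by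
      intro x k
      simp only [hv, star_mul', apply_ite (star : ℂ → ℂ), star_one, star_zero]
      ring
    simp only [hterm]
    rw [← Finset.sum_mul_sum]
    rw [hψ i.2 j.2]
    have hx : (∑ x : Fin dM × Fin dM,
        (if x = (i.1, i.1) then (1:ℂ) else 0) * (if x = (j.1, j.1) then 1 else 0))
        = if i.1 = j.1 then 1 else 0 := by
      simp only [ite_mul, one_mul, zero_mul]
      rw [Finset.sum_ite_eq' Finset.univ ((i.1, i.1) : Fin dM × Fin dM)]
      simp [Prod.ext_iff]
    rw [hx]
    by_cases h1 : i.1 = j.1 <;> by_cases h2 : i.2 = j.2 <;>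
      simp [h1, h2, Prod.ext_iff]
  have hPpsd : P.PosSemidef := psd_sum s _ (fun i _ => outer_posSemidef (v i))
  have hPidem : P * P = P := sum_outer_proj s v (fun i _ j _ => h_on i j)
  have hP1 : (1 - P).PosSemidef := psd_one_sub P hPpsd.1 hPidem
  -- hermiticity of Y
  have hτH : τ.IsHermitian := by
    ext x y
    simp only [hτ, tauRMCE', Matrix.conjTranspose_apply, Matrix.of_apply, star_sum, star_mul',
      star_star]
    exact Finset.sum_congr rfl fun d _ => mul_comm _ _
  have hYH : Y.IsHermitian :=
    Matrix.IsHermitian.sub (applyRight_isHermitian 𝓓 h𝓓.1.1 hτH) (outer_isHermitian σv)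
  -- norms and traces
  have hψnorm : ∀ m : Fin dM, ∑ k, ψ m k * star (ψ m k) = 1 := by
    intro m
    have := hψ m m
    simp only [eq_self_iff_true, if_true] at this
    rw [← this]
    exact Finset.sum_congr rfl fun k _ => mul_comm _ _
  have hωnorm : ∑ q : Fin dE × Fin dE', ω q * star (ω q) = 1 := by
    have : ∀ q : Fin dE × Fin dE', ω q * star (ω q) = (Complex.normSq (ω q) : ℂ) := fun q =>
      Complex.mul_conj (ω q)
    simp only [this]
    rw [← Complex.ofReal_sum]
    rw [hω]
    norm_num
  have hmsgnorm : ∀ m : Fin dM, ∑ c : Fin dC, ∑ d : Fin dD, ∑ f : Fin dE',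
      msgVec dM dC dD dE dE' ψ ω U m ((c, d), f)
        * star (msgVec dM dC dD dE dE' ψ ω U m ((c, d), f)) = 1 := by
    intro m
    have hswap : ∑ c : Fin dC, ∑ d : Fin dD, ∑ f : Fin dE',
        msgVec dM dC dD dE dE' ψ ω U m ((c, d), f)
          * star (msgVec dM dC dD dE dE' ψ ω U m ((c, d), f))
        = ∑ f : Fin dE', ∑ x : Fin dC × Fin dD,
            msgVec dM dC dD dE dE' ψ ω U m (x, f)
              * star (msgVec dM dC dD dE dE' ψ ω U m (x, f)) := by
      calc ∑ c : Fin dC, ∑ d : Fin dD, ∑ f : Fin dE',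
            msgVec dM dC dD dE dE' ψ ω U m ((c, d), f)
              * star (msgVec dM dC dD dE dE' ψ ω U m ((c, d), f))
          = ∑ c : Fin dC, ∑ f : Fin dE', ∑ d : Fin dD,
            msgVec dM dC dD dE dE' ψ ω U m ((c, d), f)
              * star (msgVec dM dC dD dE dE' ψ ω U m ((c, d), f)) :=
            Finset.sum_congr rfl fun c _ => Finset.sum_comm
        _ = ∑ f : Fin dE', ∑ c : Fin dC, ∑ d : Fin dD,
            msgVec dM dC dD dE dE' ψ ω U m ((c, d), f)
              * star (msgVec dM dC dD dE dE' ψ ω U m ((c, d), f)) :=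
            Finset.sum_comm
        _ = ∑ f : Fin dE', ∑ x : Fin dC × Fin dD,
            msgVec dM dC dD dE dE' ψ ω U m (x, f)
              * star (msgVec dM dC dD dE dE' ψ ω U m (x, f)) :=
            Finset.sum_congr rfl fun f _ => by rw [Fintype.sum_prod_type]
    rw [hswap]
    have hfix : ∀ f : Fin dE', ∑ x : Fin dC × Fin dD,
        msgVec dM dC dD dE dE' ψ ω U m (x, f)
          * star (msgVec dM dC dD dE dE' ψ ω U m (x, f))
        = ∑ b : Fin dM × Fin dE, (ψ m b.1 * ω (b.2, f)) * star (ψ m b.1 * ω (b.2, f)) := by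
      intro f
      have hmv : ∀ x : Fin dC × Fin dD, msgVec dM dC dD dE dE' ψ ω U m (x, f)
          = (U *ᵥ fun b : Fin dM × Fin dE => ψ m b.1 * ω (b.2, f)) x := by
        intro x
        simp only [msgVec, Matrix.mulVec, dotProduct, Fintype.sum_prod_type]
        exact Finset.sum_congr rfl fun n _ => Finset.sum_congr rfl fun e _ => by ring
      simp only [hmv]
      exact unitary_norm U hU.1 _
    simp only [hfix]
    have : ∀ (f : Fin dE') (b : Fin dM × Fin dE),
        (ψ m b.1 * ω (b.2, f)) * star (ψ m b.1 * ω (b.2, f))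
        = (ψ m b.1 * star (ψ m b.1)) * (ω (b.2, f) * star (ω (b.2, f))) := by
      intro f b
      rw [star_mul']
      ring
    simp only [this]
    rw [Finset.sum_comm, Fintype.sum_prod_type]
    have hinner : ∀ n : Fin dM, ∑ e : Fin dE, ∑ f : Fin dE',
        (ψ m n * star (ψ m n)) * (ω (e, f) * star (ω (e, f)))
        = ψ m n * star (ψ m n) := by
      intro n
      have hw : ∑ e : Fin dE, ∑ f : Fin dE', ω (e, f) * star (ω (e, f)) = 1 := by
        rw [← hωnorm, Fintype.sum_prod_type]
      simp only [← Finset.mul_sum]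
      rw [hw, mul_one]
    simp only [hinner]
    exact hψnorm m
  have hdecVec : ∀ (x1 : Fin dM × Fin dM) (c : Fin dC) (d : Fin dD) (f : Fin dE'),
      decVec dM dC dD dE dE' p ψ ω U (x1, ((c, d), f))
      = (if x1.1 = x1.2 then ((Real.sqrt (p x1.2) : ℝ) : ℂ) else 0)
        * msgVec dM dC dD dE dE' ψ ω U x1.2 ((c, d), f) := fun _ _ _ _ => rfl
  have hpair : ∀ (x1 : Fin dM × Fin dM) (z w : ℂ),
      ((if x1.1 = x1.2 then ((Real.sqrt (p x1.2) : ℝ) : ℂ) else 0) * z)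
        * star ((if x1.1 = x1.2 then ((Real.sqrt (p x1.2) : ℝ) : ℂ) else 0) * w)
      = (if x1.1 = x1.2 then ((p x1.2 : ℝ) : ℂ) else 0) * (z * star w) := by
    intro x1 z w
    rcases eq_or_ne x1.1 x1.2 with h | h
    · simp only [if_pos h]
      exact sqrt_pair _ (hp0 _) _ _
    · simp [if_neg h]
  -- trace of τ
  have hτtr : τ.trace = 1 := by
    have h1 : τ.trace = ∑ x1 : Fin dM × Fin dM, ∑ c : Fin dC, ∑ f : Fin dE', ∑ d : Fin dD,
        decVec dM dC dD dE dE' p ψ ω U (x1, ((c, d), f))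
          * star (decVec dM dC dD dE dE' p ψ ω U (x1, ((c, d), f))) := by
      rw [Matrix.trace]
      simp only [Matrix.diag]
      rw [Fintype.sum_prod_type]
      refine Finset.sum_congr rfl fun x1 _ => ?_
      rw [Fintype.sum_prod_type]
      rfl
    rw [h1]
    have h2 : ∀ x1 : Fin dM × Fin dM, ∑ c : Fin dC, ∑ f : Fin dE', ∑ d : Fin dD,
        decVec dM dC dD dE dE' p ψ ω U (x1, ((c, d), f))
          * star (decVec dM dC dD dE dE' p ψ ω U (x1, ((c, d), f)))
        = (if x1.1 = x1.2 then ((p x1.2 : ℝ) : ℂ) else 0) := by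
      intro x1
      have h3 : ∀ c f d, decVec dM dC dD dE dE' p ψ ω U (x1, ((c, d), f))
          * star (decVec dM dC dD dE dE' p ψ ω U (x1, ((c, d), f)))
          = (if x1.1 = x1.2 then ((p x1.2 : ℝ) : ℂ) else 0)
            * (msgVec dM dC dD dE dE' ψ ω U x1.2 ((c, d), f)
              * star (msgVec dM dC dD dE dE' ψ ω U x1.2 ((c, d), f))) := by
        intro c f d
        rw [hdecVec, hpair]
      simp only [h3, ← Finset.mul_sum]
      have h4 : ∑ c : Fin dC, ∑ f : Fin dE', ∑ d : Fin dD,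
          msgVec dM dC dD dE dE' ψ ω U x1.2 ((c, d), f)
            * star (msgVec dM dC dD dE dE' ψ ω U x1.2 ((c, d), f)) = 1 := by
        rw [← hmsgnorm x1.2]
        exact Finset.sum_congr rfl fun c _ => Finset.sum_comm
      rw [h4, mul_one]
    simp only [h2]
    rw [Fintype.sum_prod_type]
    simp only [Finset.sum_ite_eq, Finset.mem_univ, if_true]
    rw [← Complex.ofReal_sum]
    rw [hp1]
    norm_num
  -- trace of outer σv
  have hσtr : (outer σv).trace = 1 := by
    have h1 : (outer σv).trace = ∑ x1 : Fin dM × Fin dM, ∑ k : Fin dM,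
        σv (x1, k) * star (σv (x1, k)) := by
      rw [Matrix.trace]
      simp only [Matrix.diag, outer, Matrix.of_apply]
      rw [Fintype.sum_prod_type]
    rw [h1]
    have h2 : ∀ (x1 : Fin dM × Fin dM) (k : Fin dM), σv (x1, k) * star (σv (x1, k))
        = (if x1.1 = x1.2 then ((p x1.2 : ℝ) : ℂ) else 0) * (ψ x1.2 k * star (ψ x1.2 k)) := by
      intro x1 k
      exact hpair x1 (ψ x1.2 k) (ψ x1.2 k)
    simp only [h2, ← Finset.mul_sum]
    rw [Fintype.sum_prod_type]
    simp only [Finset.sum_ite_eq, Finset.mem_univ, if_true, ite_mul, zero_mul]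
    have : ∀ m : Fin dM, ((p m : ℝ) : ℂ) * ∑ k, ψ m k * star (ψ m k) = ((p m : ℝ) : ℂ) := by
      intro m
      rw [hψnorm m, mul_one]
    simp only [this]
    rw [← Complex.ofReal_sum, hp1]
    norm_num
  have hYtr : Y.trace = 0 := by
    rw [hY, Matrix.trace_sub, applyRight_trace 𝓓 h𝓓.2 τ, hτtr, hσtr, sub_self]
  -- trace of P times a matrix
  have htrP : ∀ ρ : Matrix ((Fin dM × Fin dM) × Fin dM) ((Fin dM × Fin dM) × Fin dM) ℂ,
      (P * ρ).trace = ∑ i ∈ s, ∑ x, ∑ y, v i x * star (v i y) * ρ y x := by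
    intro ρ
    rw [hP, Finset.sum_mul, Matrix.trace_sum]
    refine Finset.sum_congr rfl fun i _ => ?_
    rw [Matrix.trace]
    simp only [Matrix.diag, Matrix.mul_apply, outer, Matrix.of_apply]
  -- sigma part vanishes
  have hσ0 : ∀ i ∈ s, ∑ x, ∑ y, v i x * star (v i y) * (outer σv) y x = 0 := by
    intro i hi
    have hiz : i.2 ≠ i.1 := by
      rw [hs] at hi
      exact (Finset.mem_filter.mp hi).2
    have hsplit : ∑ x, ∑ y, v i x * star (v i y) * (outer σv) y x
        = (∑ y, star (v i y) * σv y) * (∑ x, v i x * star (σv x)) := by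
      rw [Finset.sum_mul_sum, Finset.sum_comm]
      refine Finset.sum_congr rfl fun x _ => Finset.sum_congr rfl fun y _ => ?_
      simp only [outer, Matrix.of_apply]
      ring
    rw [hsplit]
    have hzero : (∑ y, star (v i y) * σv y) = 0 := by
      rw [Fintype.sum_prod_type]
      have hterm : ∀ (x1 : Fin dM × Fin dM) (k : Fin dM),
          star (v i (x1, k)) * σv (x1, k)
          = if x1 = (i.1, i.1) then star (ψ i.2 k) * σv ((i.1, i.1), k) else 0 := by
        intro x1 k
        simp only [hv, star_mul', apply_ite (star : ℂ → ℂ), star_one, star_zero]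
        split_ifs with h
        · subst h; ring
        · ring
      simp only [hterm]
      rw [Finset.sum_comm]
      simp only [Finset.sum_ite_eq', Finset.mem_univ, if_true]
      have hσval : ∀ k, σv ((i.1, i.1), k)
          = ((Real.sqrt (p i.1) : ℝ) : ℂ) * ψ i.1 k := by
        intro k
        simp [hσv, sigmaVec]
      simp only [hσval]
      have hpull : ∑ k, star (ψ i.2 k) * (((Real.sqrt (p i.1) : ℝ) : ℂ) * ψ i.1 k)
          = ((Real.sqrt (p i.1) : ℝ) : ℂ) * ∑ k, star (ψ i.2 k) * ψ i.1 k := by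
        rw [Finset.mul_sum]
        exact Finset.sum_congr rfl fun k _ => by ring
      rw [hpull, hψ i.2 i.1, if_neg hiz, mul_zero]
    rw [hzero, zero_mul]
  -- block structure of τ
  have hblock : ∀ m : Fin dM,
      (Matrix.of fun u w : Fin dC × Fin dE' => τ ((m, m), u) ((m, m), w))
      = ((p m : ℝ) : ℂ) • msgCE' dM dC dD dE dE' ψ ω U m := by
    intro m
    ext u w
    simp only [hτ, tauRMCE', msgCE', Matrix.of_apply, Matrix.smul_apply, smul_eq_mul]
    rw [Finset.mul_sum]
    refine Finset.sum_congr rfl fun d _ => ?_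
    rw [hdecVec (m, m) u.1 d u.2, hdecVec (m, m) w.1 d w.2, hpair (m, m)]
    simp
  -- the decoding part
  have happ : ∀ i ∈ s, ∑ x, ∑ y, v i x * star (v i y) * (applyRight 𝓓 τ) y x
      = ((p i.1 : ℝ) : ℂ) * ∑ n, ∑ n', star (ψ i.2 n)
          * 𝓓 (msgCE' dM dC dD dE dE' ψ ω U i.1) n n' * ψ i.2 n' := by
    intro i _
    have hterm : ∀ (x1 y1 : Fin dM × Fin dM) (x2 y2 : Fin dM),
        v i (x1, x2) * star (v i (y1, y2)) * (applyRight 𝓓 τ) (y1, y2) (x1, x2)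
        = if x1 = (i.1, i.1) then (if y1 = (i.1, i.1) then
            ψ i.2 x2 * star (ψ i.2 y2)
              * (applyRight 𝓓 τ) ((i.1, i.1), y2) ((i.1, i.1), x2) else 0) else 0 := by
      intro x1 y1 x2 y2
      simp only [hv, star_mul', apply_ite (star : ℂ → ℂ), star_one, star_zero]
      split_ifs with h1 h2
      · subst h1; subst h2; ring
      all_goals ring
    simp only [Fintype.sum_prod_type]
    simp only [hterm]
    simp only [Prod.mk.injEq, ite_and, Finset.sum_ite_irrel, Finset.sum_const_zero,
      Finset.sum_ite_eq', Finset.mem_univ, if_true]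
    have hb : ∀ (y2 x2 : Fin dM), (applyRight 𝓓 τ) ((i.1, i.1), y2) ((i.1, i.1), x2)
        = ((p i.1 : ℝ) : ℂ) * 𝓓 (msgCE' dM dC dD dE dE' ψ ω U i.1) y2 x2 := by
      intro y2 x2
      show 𝓓 (Matrix.of fun u w => τ ((i.1, i.1), u) ((i.1, i.1), w)) y2 x2 = _
      rw [hblock i.1, LinearMap.map_smul]
      simp
    simp only [hb]
    rw [Finset.mul_sum, Finset.sum_comm]
    refine Finset.sum_congr rfl fun n _ => ?_
    rw [Finset.mul_sum]
    refine Finset.sum_congr rfl fun n' _ => ?_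
    ring
  -- put everything together
  have hPYtrace : (P * Y).trace = ∑ i ∈ s, ((p i.1 : ℝ) : ℂ) * ∑ n, ∑ n',
      star (ψ i.2 n) * 𝓓 (msgCE' dM dC dD dE dE' ψ ω U i.1) n n' * ψ i.2 n' := by
    rw [hY, Matrix.mul_sub, Matrix.trace_sub, htrP, htrP]
    rw [Finset.sum_congr rfl hσ0, Finset.sum_congr rfl happ]
    simp
  have hre : (P * Y).trace.re = ∑ i ∈ s, (p i.1) * (∑ n, ∑ n',
      star (ψ i.2 n) * 𝓓 (msgCE' dM dC dD dE dE' ψ ω U i.1) n n' * ψ i.2 n').re := by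
    rw [hPYtrace, Complex.re_sum]
    refine Finset.sum_congr rfl fun i _ => ?_
    rw [Complex.re_ofReal_mul]
  have hfinal : (P * Y).trace.re = (1 / (dM : ℝ)) * ∑ m : Fin dM,
      ∑ m' ∈ Finset.univ.filter (fun m' : Fin dM => m' ≠ m),
      (∑ n, ∑ n', star (ψ m' n) * 𝓓 (msgCE' dM dC dD dE dE' ψ ω U m) n n' * ψ m' n').re := by
    rw [hre, hs, Finset.sum_filter, Fintype.sum_prod_type, Finset.mul_sum]
    refine Finset.sum_congr rfl fun m _ => ?_
    rw [Finset.mul_sum, Finset.sum_filter]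
    refine Finset.sum_congr rfl fun m' _ => ?_
    by_cases h : m' ≠ m
    · simp only [if_pos h, hunif m]
    · simp only [if_neg h, mul_zero]
  have hkey := key_bound Y P hYH hYtr hPpsd hP1
  rw [← hfinal]
  calc (P * Y).trace.re ≤ traceNorm Y / 2 := hkey
    _ ≤ δ / 2 := by linarith [hdec]
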